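/- (Abstract first-order convergence of the implicit θ-scheme, 1/2 ≤ θ ≤ 1, in the energy norm.) Let V be a real inner product space, and let a : V × V → ℝ be a symmetric positive semidefinite bilinear form. Let τ > 0, N ≥ 1, T = Nτ, tⁿ = nτ, and θ ∈ [1/2, 1]. Let u : [0,T] → V be twice continuously differentiable and ρ : [0,T] → V continuously differentiable (in the norm of V), and suppose η⁰, …, η^N ∈ V satisfy, for each n = 1, …, N and every v ∈ V, ⟪(ηⁿ - η^{n-1})/τ, v⟫ + a(θ ηⁿ + (1-θ) η^{n-1}, v) = -⟪(ρ(tⁿ) - ρ(t^{n-1}))/τ, v⟫ + ⟪(u(tⁿ) - u(t^{n-1}))/τ - (θ u'(tⁿ) + (1-θ) u'(t^{n-1})), v⟫. Then a(η^N, η^N) ≤ a(η⁰, η⁰) + 2 ∫₀^T ‖ρ'(s)‖² ds + 2 τ² ∫₀^T ‖u''(s)‖² ds. -/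

import Mathlib

open Set intervalIntegral
open scoped RealInnerProductSpace

set_option maxHeartbeats 1000000

lemma sq_intervalIntegral_le_of_nonneg {f : ℝ → ℝ} {c d : ℝ} (hcd : c ≤ d)
    (hf : ContinuousOn f (Icc c d)) (h0 : ∀ x ∈ Icc c d, 0 ≤ f x) :
    (∫ x in c..d, f x) ^ 2 ≤ (d - c) * ∫ x in c..d, f x ^ 2 := by
  set μ := MeasureTheory.volume.restrict (Ioc c d) with hμ
  haveI : MeasureTheory.IsFiniteMeasure μ := ⟨by
    rw [hμ, MeasureTheory.Measure.restrict_apply_univ]; exact measure_Ioc_lt_top⟩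
  have hmeas : MeasureTheory.AEStronglyMeasurable f μ :=
    (hf.aestronglyMeasurable measurableSet_Icc).mono_measure
      (MeasureTheory.Measure.restrict_mono Ioc_subset_Icc_self le_rfl)
  obtain ⟨C, hC⟩ := isCompact_Icc.exists_bound_of_continuousOn hf
  have hfae : ∀ᵐ x ∂μ, x ∈ Ioc c d := MeasureTheory.ae_restrict_mem measurableSet_Ioc
  have hmem : MeasureTheory.MemLp f (ENNReal.ofReal 2) μ := by
    apply MeasureTheory.MemLp.of_bound hmeas C
    filter_upwards [hfae] with x hx using hC x (Ioc_subset_Icc_self hx)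
  have hone : MeasureTheory.MemLp (fun _ : ℝ => (1:ℝ)) (ENNReal.ofReal 2) μ :=
    MeasureTheory.memLp_const 1
  have hpq : Real.HolderConjugate 2 2 := Real.HolderConjugate.two_two
  have h0' : 0 ≤ᵐ[μ] f := by
    filter_upwards [hfae] with x hx using h0 x (Ioc_subset_Icc_self hx)
  have hone0 : 0 ≤ᵐ[μ] (fun _ : ℝ => (1:ℝ)) := Filter.Eventually.of_forall fun _ => zero_le_one
  have key := MeasureTheory.integral_mul_le_Lp_mul_Lq_of_nonneg hpq h0' hone0 hmem hone
  simp only [mul_one] at key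
  have hrpow : ∀ x : ℝ, x ^ (2:ℝ) = x ^ 2 := fun x => by
    rw [show (2:ℝ) = ((2:ℕ):ℝ) by norm_num, Real.rpow_natCast]
  rw [intervalIntegral.integral_of_le hcd, intervalIntegral.integral_of_le hcd]
  have hB0 : 0 ≤ ∫ x, f x ^ 2 ∂μ := MeasureTheory.integral_nonneg fun x => sq_nonneg _
  have hM : ∫ x : ℝ, (1:ℝ) ^ (2:ℝ) ∂μ = d - c := by
    simp [hrpow, hμ, Real.volume_Ioc, ENNReal.toReal_ofReal (sub_nonneg.2 hcd), hcd]
  have hA0 : 0 ≤ ∫ x, f x ∂μ := MeasureTheory.integral_nonneg_of_ae h0'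
  rw [hM] at key
  have key2 : ∫ x, f x ∂μ ≤ Real.sqrt (∫ x, f x ^ 2 ∂μ) * Real.sqrt (d - c) := by
    rw [Real.sqrt_eq_rpow, Real.sqrt_eq_rpow]
    calc ∫ x, f x ∂μ ≤ (∫ x, f x ^ (2:ℝ) ∂μ) ^ (1/2:ℝ) * (d - c) ^ (1/2:ℝ) := key
    _ = (∫ x, f x ^ 2 ∂μ) ^ (1/2:ℝ) * (d - c) ^ (1/2:ℝ) := by simp [hrpow]
  have := pow_le_pow_left₀ hA0 key2 2
  nlinarith [Real.sq_sqrt hB0, Real.sq_sqrt (sub_nonneg.2 hcd),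
    Real.sqrt_nonneg (∫ x, f x ^ 2 ∂μ), Real.sqrt_nonneg (d - c)]

lemma norm_sub_le_integral_bound {E : Type*} [NormedAddCommGroup E] [NormedSpace ℝ E]
    {F : ℝ → E} {F' : ℝ → E} {φ : ℝ → ℝ} {s t : ℝ} (hst : s ≤ t)
    (hF : ContinuousOn F (Icc s t))
    (hF' : ∀ x ∈ Ico s t, HasDerivWithinAt F (F' x) (Ici x) x)
    (hφ : ContinuousOn φ (Icc s t))
    (hbd : ∀ x ∈ Ico s t, ‖F' x‖ ≤ φ x) :
    ‖F t - F s‖ ≤ ∫ x in s..t, φ x := by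
  have hmem : ∀ x ∈ Ico s t, Icc s t ∈ nhdsWithin x (Ici x) := by
    intro x hx
    apply mem_nhdsWithin.mpr
    exact ⟨Iio t, isOpen_Iio, hx.2,
      fun y hy => ⟨le_trans hx.1 hy.2, le_of_lt hy.1⟩⟩
  have hmem' : ∀ x ∈ Ico s t, Icc s t ∈ nhdsWithin x (Ioi x) := fun x hx =>
    nhdsWithin_mono x Ioi_subset_Ici_self (hmem x hx)
  have hInt : ∀ x ∈ Icc s t, IntervalIntegrable φ MeasureTheory.volume s x := fun x hx =>
    (hφ.mono (by rw [uIcc_of_le hx.1]; exact Icc_subset_Icc le_rfl hx.2)).intervalIntegrable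
  have hBcont : ContinuousOn (fun y => ∫ x in s..y, φ x) (Icc s t) := by
    have h := intervalIntegral.continuousOn_primitive_interval
      (μ := MeasureTheory.volume) (a := s) (b := t) (f := φ)
      (by rw [uIcc_of_le hst]; exact hφ.integrableOn_Icc)
    rwa [uIcc_of_le hst] at h
  have key := image_norm_le_of_norm_deriv_right_le_deriv_boundary'
    (f := fun y => F y - F s) (f' := F') (B := fun y => ∫ x in s..y, φ x) (B' := φ)
    (hF.sub continuousOn_const)
    (fun x hx => (hF' x hx).sub_const _)
    (by simp)
    hBcont
    (fun x hx => intervalIntegral.integral_hasDerivWithinAt_right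
      (hInt x (Ico_subset_Icc_self hx))
      ⟨Icc s t, hmem' x hx, hφ.aestronglyMeasurable measurableSet_Icc⟩
      ((hφ x (Ico_subset_Icc_self hx)).mono_of_mem_nhdsWithin (hmem' x hx)))
    hbd
  simpa using key (right_mem_Icc.2 hst)

lemma bilin_id {V : Type*} [AddCommGroup V] [Module ℝ V] (a : V →ₗ[ℝ] V →ₗ[ℝ] ℝ)
    (θ : ℝ) (x y : V) (h : a x y = a y x) :
    a (θ • x + (1 - θ) • y) (x - y)
      = (a x x - a y y) / 2 + (θ - 1/2) * a (x - y) (x - y) := by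
  simp only [map_add, map_sub, map_smul, LinearMap.add_apply, LinearMap.sub_apply,
    LinearMap.smul_apply, smul_eq_mul]
  linear_combination (-1/2 : ℝ) * h


/-- Abstract first-order convergence of the implicit θ-scheme, `θ ∈ [1/2, 1]`,
in the energy norm:
`a(η^N, η^N) ≤ a(η⁰, η⁰) + 2 ∫₀ᵀ ‖ρ'‖² + 2 τ² ∫₀ᵀ ‖u''‖²`. -/
theorem theta_scheme_energy_convergence
    {V : Type*} [NormedAddCommGroup V] [InnerProductSpace ℝ V]
    (a : V →ₗ[ℝ] V →ₗ[ℝ] ℝ)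
    (hsym : ∀ x y : V, a x y = a y x)
    (hpos : ∀ v : V, 0 ≤ a v v)
    (τ : ℝ) (hτ : 0 < τ) (N : ℕ) (hN : 1 ≤ N) (T : ℝ) (hT : T = N * τ)
    (θ : ℝ) (hθ : θ ∈ Set.Icc (1 / 2 : ℝ) 1)
    (u u' u'' ρ ρ' : ℝ → V)
    (hu : ∀ t ∈ Icc (0 : ℝ) T, HasDerivWithinAt u (u' t) (Icc 0 T) t)
    (hu' : ∀ t ∈ Icc (0 : ℝ) T, HasDerivWithinAt u' (u'' t) (Icc 0 T) t)
    (hu'' : ContinuousOn u'' (Icc 0 T))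
    (hρ : ∀ t ∈ Icc (0 : ℝ) T, HasDerivWithinAt ρ (ρ' t) (Icc 0 T) t)
    (hρ' : ContinuousOn ρ' (Icc 0 T))
    (η : ℕ → V)
    (hscheme : ∀ n, 1 ≤ n → n ≤ N → ∀ v : V,
      ⟪(1 / τ) • (η n - η (n - 1)), v⟫ + a (θ • η n + (1 - θ) • η (n - 1)) v
        = -⟪(1 / τ) • (ρ ((n : ℝ) * τ) - ρ (((n : ℝ) - 1) * τ)), v⟫
          + ⟪(1 / τ) • (u ((n : ℝ) * τ) - u (((n : ℝ) - 1) * τ))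
              - (θ • u' ((n : ℝ) * τ) + (1 - θ) • u' (((n : ℝ) - 1) * τ)), v⟫) :
    a (η N) (η N) ≤ a (η 0) (η 0) + 2 * (∫ s in (0 : ℝ)..T, ‖ρ' s‖ ^ 2)
      + 2 * τ ^ 2 * ∫ s in (0 : ℝ)..T, ‖u'' s‖ ^ 2 := by
  obtain ⟨hθ1, hθ2⟩ := hθ
  have hτ0 : τ ≠ 0 := ne_of_gt hτ
  have hT0 : (0:ℝ) ≤ T := by rw [hT]; positivity
  have hρn : ContinuousOn (fun x => ‖ρ' x‖) (Icc 0 T) := hρ'.norm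
  have hun : ContinuousOn (fun x => ‖u'' x‖) (Icc 0 T) := hu''.norm
  have hIρ2 : ∀ c d : ℝ, 0 ≤ c → c ≤ d → d ≤ T →
      IntervalIntegrable (fun x => ‖ρ' x‖ ^ 2) MeasureTheory.volume c d := by
    intro c d h1 h2 h3
    apply ContinuousOn.intervalIntegrable
    exact (hρn.pow 2).mono (by rw [uIcc_of_le h2]; exact Icc_subset_Icc h1 h3)
  have hIu2 : ∀ c d : ℝ, 0 ≤ c → c ≤ d → d ≤ T →
      IntervalIntegrable (fun x => ‖u'' x‖ ^ 2) MeasureTheory.volume c d := by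
    intro c d h1 h2 h3
    apply ContinuousOn.intervalIntegrable
    exact (hun.pow 2).mono (by rw [uIcc_of_le h2]; exact Icc_subset_Icc h1 h3)
  -- the one-step estimate
  have key : ∀ m : ℕ, m + 1 ≤ N →
      a (η (m+1)) (η (m+1)) ≤ a (η m) (η m)
        + (∫ x in ((m:ℝ)*τ)..(((m:ℝ)+1)*τ), ‖ρ' x‖^2)
        + τ^2 * ∫ x in ((m:ℝ)*τ)..(((m:ℝ)+1)*τ), ‖u'' x‖^2 := by
    intro m hmN
    have hmN' : (m:ℝ)+1 ≤ (N:ℝ) := by exact_mod_cast hmN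
    set s : ℝ := (m:ℝ)*τ with hs
    set t : ℝ := ((m:ℝ)+1)*τ with ht
    have hs0 : 0 ≤ s := by rw [hs]; positivity
    have hst : s ≤ t := by rw [hs, ht]; nlinarith
    have htT : t ≤ T := by rw [ht, hT]; nlinarith
    have hsub : Icc s t ⊆ Icc 0 T := Icc_subset_Icc hs0 htT
    have hsub' : uIcc s t ⊆ Icc 0 T := by rw [uIcc_of_le hst]; exact hsub
    have hIci : ∀ x ∈ Ico s t, Icc (0:ℝ) T ∈ nhdsWithin x (Ici x) := by
      intro x hx
      apply mem_nhdsWithin.mpr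
      exact ⟨Iio T, isOpen_Iio, lt_of_lt_of_le hx.2 htT,
        fun y hy => ⟨le_trans hs0 (le_trans hx.1 hy.2), le_of_lt hy.1⟩⟩
    -- ρ-term bound
    have hρ1 : ‖ρ t - ρ s‖ ≤ ∫ x in s..t, ‖ρ' x‖ := by
      apply norm_sub_le_integral_bound hst
      · exact fun x hx => ((hρ x (hsub hx)).continuousWithinAt).mono hsub
      · intro x hx
        exact (hρ x (hsub (Ico_subset_Icc_self hx))).mono_of_mem_nhdsWithin (hIci x hx)
      · exact hρn.mono hsub
      · exact fun x _ => le_refl _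
    have hρcs : ‖ρ t - ρ s‖^2 ≤ τ * ∫ x in s..t, ‖ρ' x‖^2 := by
      have h2 := sq_intervalIntegral_le_of_nonneg hst (hρn.mono hsub)
        (fun x _ => norm_nonneg _)
      have h4 := pow_le_pow_left₀ (norm_nonneg _) hρ1 2
      have hts : t - s = τ := by rw [hs, ht]; ring
      rw [hts] at h2
      linarith
    -- u-consistency term
    set c : ℝ := t - θ*τ with hc
    set S : V := (1/τ) • (u t - u s) - (θ • u' t + (1-θ) • u' s) with hS
    set g : ℝ → V := fun y => (c - y) • u' y + u y with hg
    have hfd : ∀ x ∈ Icc (0:ℝ) T,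
        HasDerivWithinAt g ((c - x) • u'' x) (Icc 0 T) x := by
      intro x hx
      have h1 : HasDerivWithinAt (fun y : ℝ => c - y) (-1 : ℝ) (Icc 0 T) x := by
        simpa using ((hasDerivWithinAt_id x (Icc (0:ℝ) T)).const_sub c)
      have h2 := (h1.smul (hu' x hx)).add (hu x hx)
      convert h2 using 1
      · rfl
      simp [neg_smul, one_smul]
    have hgts : τ • S = g t - g s := by
      rw [hS, smul_sub, smul_smul, mul_one_div_cancel hτ0, one_smul, smul_add,
        smul_smul, smul_smul, hg]
      simp only [hc, hs, ht]
      module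
    have hg1 : ‖g t - g s‖ ≤ ∫ x in s..t, τ * ‖u'' x‖ := by
      apply norm_sub_le_integral_bound hst
      · exact fun x hx => ((hfd x (hsub hx)).continuousWithinAt).mono hsub
      · intro x hx
        exact (hfd x (hsub (Ico_subset_Icc_self hx))).mono_of_mem_nhdsWithin (hIci x hx)
      · exact (hun.mono hsub).const_smul τ
      · intro x hx
        rw [norm_smul, Real.norm_eq_abs]
        apply mul_le_mul_of_nonneg_right _ (norm_nonneg _)
        rw [abs_le]
        have hx1 := hx.1
        have hx2 := le_of_lt hx.2
        rw [hs] at hx1; rw [ht] at hx2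
        constructor
        · rw [hc, ht]; nlinarith
        · rw [hc, ht]; nlinarith
    have hSbd : ‖S‖ ≤ ∫ x in s..t, ‖u'' x‖ := by
      have h1' : τ * ‖S‖ ≤ τ * ∫ x in s..t, ‖u'' x‖ := by
        rw [intervalIntegral.integral_const_mul] at hg1
        calc τ * ‖S‖ = ‖τ • S‖ := by
              rw [norm_smul, Real.norm_eq_abs, abs_of_pos hτ]
        _ = ‖g t - g s‖ := by rw [hgts]
        _ ≤ τ * ∫ x in s..t, ‖u'' x‖ := hg1
      exact le_of_mul_le_mul_left h1' hτ
    have hScs : ‖S‖^2 ≤ τ * ∫ x in s..t, ‖u'' x‖^2 := by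
      have h3 := sq_intervalIntegral_le_of_nonneg hst (hun.mono hsub)
        (fun x _ => norm_nonneg _)
      have h4 := pow_le_pow_left₀ (norm_nonneg _) hSbd 2
      have hts : t - s = τ := by rw [hs, ht]; ring
      rw [hts] at h3
      linarith
    -- energy argument
    have hsch := hscheme (m+1) (Nat.le_add_left 1 m) hmN (η (m+1) - η m)
    have e1 : ((↑(m+1):ℝ) - 1) * τ = s := by rw [hs]; push_cast; ring
    have e2 : ((↑(m+1):ℝ)) * τ = t := by rw [ht]; push_cast; ring
    have e3 : m + 1 - 1 = m := rfl
    rw [e1, e2, e3] at hsch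
    set d : V := η (m+1) - η m with hd
    set w : V := S - (1/τ) • (ρ t - ρ s) with hw
    rw [← hS] at hsch
    have hrhs : -⟪(1/τ) • (ρ t - ρ s), d⟫ + ⟪S, d⟫ = ⟪w, d⟫ := by
      rw [hw, hS]
      simp only [inner_sub_left]
      ring
    have hinner : ⟪(1/τ) • d, d⟫ = (1/τ) * ‖d‖^2 := by
      rw [real_inner_smul_left, real_inner_self_eq_norm_sq]
    have hbil : a (θ • η (m+1) + (1 - θ) • η m) d
        = (a (η (m+1)) (η (m+1)) - a (η m) (η m))/2 + (θ - 1/2) * a d d := by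
      rw [hd]; exact bilin_id a θ (η (m+1)) (η m) (hsym _ _)
    rw [hinner, hbil, hrhs] at hsch
    have h2 : ⟪w, d⟫ ≤ ‖w‖ * ‖d‖ := real_inner_le_norm w d
    have h3 : 0 ≤ (θ - 1/2) * a d d := mul_nonneg (by linarith) (hpos d)
    have amgm : ‖w‖ * ‖d‖ ≤ (τ/4) * ‖w‖^2 + (1/τ) * ‖d‖^2 := by
      rw [← sub_nonneg]
      have heq : (τ/4) * ‖w‖^2 + (1/τ) * ‖d‖^2 - ‖w‖ * ‖d‖
          = (τ * ‖w‖ - 2 * ‖d‖)^2 / (4*τ) := by field_simp; ring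
      rw [heq]; positivity
    have hstep : a (η (m+1)) (η (m+1)) ≤ a (η m) (η m) + (τ/2) * ‖w‖^2 := by
      linarith [hsch.le, hsch.ge, h2, h3, amgm]
    -- combine
    have hWbd : ‖w‖ ≤ ‖S‖ + (1/τ) * ‖ρ t - ρ s‖ := by
      calc ‖w‖ ≤ ‖S‖ + ‖(1/τ) • (ρ t - ρ s)‖ := norm_sub_le _ _
      _ = ‖S‖ + (1/τ) * ‖ρ t - ρ s‖ := by
          rw [norm_smul, Real.norm_eq_abs, abs_of_pos (by positivity)]
    have hP0 : (0:ℝ) ≤ ‖ρ t - ρ s‖ := norm_nonneg _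
    have hQ0 : (0:ℝ) ≤ ‖S‖ := norm_nonneg _
    have h5 : ‖w‖^2 ≤ 2*‖S‖^2 + 2*((1/τ)*‖ρ t - ρ s‖)^2 := by
      nlinarith [hWbd, norm_nonneg w, hP0, hQ0, sq_nonneg (‖S‖ - (1/τ)*‖ρ t - ρ s‖),
        mul_nonneg (le_of_lt (one_div_pos.2 hτ)) hP0]
    have h6 : (τ/2) * (2*‖S‖^2 + 2*((1/τ)*‖ρ t - ρ s‖)^2)
        = τ*‖S‖^2 + ‖ρ t - ρ s‖^2/τ := by
      field_simp
    have h7 : ‖ρ t - ρ s‖^2/τ ≤ ∫ x in s..t, ‖ρ' x‖^2 := by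
      rw [div_le_iff₀ hτ]; nlinarith [hρcs]
    have h8 : τ*‖S‖^2 ≤ τ^2 * ∫ x in s..t, ‖u'' x‖^2 := by nlinarith [hScs]
    have h9 := mul_le_mul_of_nonneg_left h5 (le_of_lt (by positivity : (0:ℝ) < τ/2))
    linarith [hstep, h9, h6.le, h6.ge, h7, h8]
  -- induction
  have main : ∀ n : ℕ, n ≤ N →
      a (η n) (η n) ≤ a (η 0) (η 0) + (∫ x in (0:ℝ)..((n:ℝ)*τ), ‖ρ' x‖^2)
        + τ^2 * ∫ x in (0:ℝ)..((n:ℝ)*τ), ‖u'' x‖^2 := by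
    intro n
    induction n with
    | zero => intro _; simp
    | succ m ih =>
      intro hm
      have hmN : m ≤ N := Nat.le_of_succ_le hm
      have h1 := ih hmN
      have h2 := key m hm
      have hm0 : (0:ℝ) ≤ (m:ℝ)*τ := by positivity
      have hm1 : (m:ℝ)*τ ≤ ((m:ℝ)+1)*τ := by nlinarith
      have hm2 : ((m:ℝ)+1)*τ ≤ T := by
        rw [hT]
        have : ((m:ℝ)+1) ≤ (N:ℝ) := by exact_mod_cast hm
        nlinarith
      have hcast : ((↑(m+1):ℝ)) * τ = ((m:ℝ)+1)*τ := by push_cast; ring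
      rw [hcast]
      have hadd1 := intervalIntegral.integral_add_adjacent_intervals
        (hIρ2 0 ((m:ℝ)*τ) le_rfl hm0 (le_trans hm1 hm2))
        (hIρ2 ((m:ℝ)*τ) (((m:ℝ)+1)*τ) hm0 hm1 hm2)
      have hadd2 := intervalIntegral.integral_add_adjacent_intervals
        (hIu2 0 ((m:ℝ)*τ) le_rfl hm0 (le_trans hm1 hm2))
        (hIu2 ((m:ℝ)*τ) (((m:ℝ)+1)*τ) hm0 hm1 hm2)
      have hadd2' : τ^2 * (∫ x in (0:ℝ)..((m:ℝ)*τ), ‖u'' x‖^2)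
          + τ^2 * (∫ x in ((m:ℝ)*τ)..(((m:ℝ)+1)*τ), ‖u'' x‖^2)
          = τ^2 * ∫ x in (0:ℝ)..(((m:ℝ)+1)*τ), ‖u'' x‖^2 := by
        rw [← hadd2]; ring
      linarith [h1, h2, hadd1.le, hadd1.ge, hadd2'.le, hadd2'.ge]
  have hfin := main N le_rfl
  rw [← hT] at hfin
  have hI1 : (0:ℝ) ≤ ∫ x in (0:ℝ)..T, ‖ρ' x‖^2 :=
    intervalIntegral.integral_nonneg hT0 fun x _ => by positivity
  have hI2 : (0:ℝ) ≤ ∫ x in (0:ℝ)..T, ‖u'' x‖^2 :=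
    intervalIntegral.integral_nonneg hT0 fun x _ => by positivity
  have hI2' : (0:ℝ) ≤ τ^2 * ∫ x in (0:ℝ)..T, ‖u'' x‖^2 := mul_nonneg (sq_nonneg τ) hI2
  linarith
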